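/- Let T = {T_1,...,T_r} be a triangular set in K[U][X] and F ∈ K[U][X]. If res(F, T) ≠ 0 in K[U][X], then F does not vanish identically on any irreducible component of V_{K̄(U)}(sat(T)) — in particular, F is not in the saturated ideal sat(T) = {G : I_T^s·G ∈ ⟨T⟩ for some s ≥ 0} when T is a regular chain. -/

import Mathlib

open MvPolynomial

noncomputable section

variable {K : Type*} [Field K] {d n : ℕ}

/-- Specialization of parameters: `K[U][X] → K̄[X]` substituting `a` for `U`. -/
def specAt (a : Fin d → AlgebraicClosure K) :
    MvPolynomial (Fin n) (MvPolynomial (Fin d) K) →+*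
      MvPolynomial (Fin n) (AlgebraicClosure K) :=
  MvPolynomial.map ((MvPolynomial.aeval a).toRingHom)

/-- Common zero set in `K̄ⁿ` of the specializations at `a` of a set of polynomials. -/
def zeroSetAt (a : Fin d → AlgebraicClosure K)
    (S : Set (MvPolynomial (Fin n) (MvPolynomial (Fin d) K))) :
    Set (Fin n → AlgebraicClosure K) :=
  {x | ∀ f ∈ S, MvPolynomial.eval x (specAt a f) = 0}

variable {A : Type*} [CommRing A]

/-- The main (largest) variable of a multivariate polynomial (defaults to `0`). -/
def mainVar [NeZero n] (F : MvPolynomial (Fin n) A) : Fin n := WithBot.unbotD 0 F.vars.max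

/-- The initial of `F`: its leading coefficient w.r.t. its main variable. -/
def initial [NeZero n] (F : MvPolynomial (Fin n) A) : MvPolynomial (Fin n) A :=
  ∑ m ∈ F.support.filter (fun m => m (mainVar F) = F.degreeOf (mainVar F)),
    MvPolynomial.monomial (m - Finsupp.single (mainVar F) (F.degreeOf (mainVar F))) (F.coeff m)

/-- `F` viewed as a univariate polynomial in the variable `j`. -/
def toUniv (j : Fin n) (F : MvPolynomial (Fin n) A) :
    Polynomial (MvPolynomial (Fin n) A) :=
  ∑ m ∈ F.support,
    Polynomial.monomial (m j) (MvPolynomial.monomial (m - Finsupp.single j (m j)) (F.coeff m))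

/-- The Sylvester matrix of two univariate polynomials. -/
def sylvester (f g : Polynomial A) :
    Matrix (Fin (f.natDegree + g.natDegree)) (Fin (f.natDegree + g.natDegree)) A :=
  fun i j =>
    if (i : ℕ) < g.natDegree then
      (if (i : ℕ) ≤ (j : ℕ) ∧ (j : ℕ) ≤ (i : ℕ) + f.natDegree then
        f.coeff (f.natDegree + i - j) else 0)
    else
      (if (i : ℕ) - g.natDegree ≤ (j : ℕ) ∧ (j : ℕ) ≤ ((i : ℕ) - g.natDegree) + g.natDegree then
        g.coeff (g.natDegree + ((i : ℕ) - g.natDegree) - j) else 0)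

/-- The resultant of two univariate polynomials (Sylvester determinant). -/
def resultant (f g : Polynomial A) : A := (sylvester f g).det

/-- `res(F, P)`: resultant w.r.t. the main variable of `P`. -/
def res1 [NeZero n] (F P : MvPolynomial (Fin n) A) : MvPolynomial (Fin n) A :=
  resultant (toUniv (mainVar P) F) (toUniv (mainVar P) P)

/-- Successive resultant of `F` w.r.t. the list `l` of polynomials. -/
def sres [NeZero n] (F : MvPolynomial (Fin n) A) (l : List (MvPolynomial (Fin n) A)) :
    MvPolynomial (Fin n) A :=
  l.foldl res1 F

/-- A triangular set: the main variables are strictly increasing. -/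
def IsTriangular [NeZero n] {r : ℕ} (T : Fin r → MvPolynomial (Fin n) A) : Prop :=
  (∀ i, (T i).vars.Nonempty) ∧ StrictMono (fun i => mainVar (T i))

/-- A regular chain. -/
def IsRegularChain [NeZero n] {r : ℕ} (T : Fin r → MvPolynomial (Fin n) A) : Prop :=
  IsTriangular T ∧ (∀ i : Fin r, (i : ℕ) = 0 → initial (T i) ≠ 0) ∧
    ∀ i : Fin r, 0 < (i : ℕ) →
      sres (initial (T i)) ((List.ofFn T).take i).reverse ≠ 0
namespace Stmt19Aux

variable {A : Type*} [CommRing A] {n : ℕ}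

lemma single_le_self (j : Fin n) (m : Fin n →₀ ℕ) :
    Finsupp.single j (m j) ≤ m := by
  intro v
  classical
  by_cases h : v = j
  · simp [Finsupp.single_apply, h]
  · rw [Finsupp.single_apply, if_neg (fun e => h e.symm)]; exact Nat.zero_le _

lemma eval_X_toUniv (j : Fin n) (F : MvPolynomial (Fin n) A) :
    Polynomial.eval (MvPolynomial.X j) (toUniv j F) = F := by
  rw [toUniv, Polynomial.eval_finset_sum]
  conv_rhs => rw [F.as_sum]
  refine Finset.sum_congr rfl fun m _ => ?_
  rw [Polynomial.eval_monomial, MvPolynomial.X_pow_eq_monomial, MvPolynomial.monomial_mul,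
    mul_one]
  congr 1
  exact congrArg _ (tsub_add_cancel_of_le (single_le_self j m))

lemma coeff_toUniv (j : Fin n) (F : MvPolynomial (Fin n) A) (k : ℕ) :
    (toUniv j F).coeff k =
      ∑ m ∈ F.support.filter (fun m => m j = k),
        MvPolynomial.monomial (m - Finsupp.single j k) (F.coeff m) := by
  classical
  rw [toUniv, Polynomial.finset_sum_coeff, Finset.sum_filter]
  refine Finset.sum_congr rfl fun m _ => ?_
  rw [Polynomial.coeff_monomial]
  split_ifs with h
  · rw [h]
  · rfl

lemma initial_eq_coeff [NeZero n] (F : MvPolynomial (Fin n) A) :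
    (toUniv (mainVar F) F).coeff (F.degreeOf (mainVar F)) = initial F := by
  rw [coeff_toUniv, initial]

end Stmt19Aux
namespace Stmt19Aux2
open Stmt19Aux

variable {A : Type*} [CommRing A] {n : ℕ}

lemma mainVar_mem_vars [NeZero n] {F : MvPolynomial (Fin n) A} (h : F.vars.Nonempty) :
    mainVar F ∈ F.vars := by
  obtain ⟨v, hv⟩ := Finset.max_of_nonempty h
  have : mainVar F = v := by rw [mainVar, hv]; rfl
  rw [this]
  exact Finset.mem_of_max hv

lemma le_mainVar [NeZero n] {F : MvPolynomial (Fin n) A} {v : Fin n} (hv : v ∈ F.vars) :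
    v ≤ mainVar F := by
  obtain ⟨w, hw⟩ := Finset.max_of_nonempty ⟨v, hv⟩
  have h1 : (v : WithBot (Fin n)) ≤ F.vars.max := Finset.le_max hv
  rw [hw] at h1
  have : mainVar F = w := by rw [mainVar, hw]; rfl
  rw [this]
  exact_mod_cast h1

lemma degreeOf_pos [NeZero n] {F : MvPolynomial (Fin n) A} {v : Fin n} (hv : v ∈ F.vars) :
    0 < F.degreeOf v := by
  rw [MvPolynomial.degreeOf_eq_sup]
  obtain ⟨d, hd, hvd⟩ := (MvPolynomial.mem_vars v).mp hv
  exact lt_of_lt_of_le (Nat.pos_of_ne_zero (Finsupp.mem_support_iff.mp hvd))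
    (Finset.le_sup (f := fun m => m v) hd)

lemma vars_coeff_toUniv {j : Fin n} {F : MvPolynomial (Fin n) A} {k : ℕ} {v : Fin n}
    (hv : v ∈ ((toUniv j F).coeff k).vars) : v ∈ F.vars ∧ v ≠ j := by
  classical
  rw [coeff_toUniv] at hv
  have h1 := MvPolynomial.vars_sum_subset _ _ hv
  obtain ⟨m, hm, hv2⟩ := Finset.mem_biUnion.mp h1
  obtain ⟨hmsup, hmj⟩ := Finset.mem_filter.mp hm
  have h2 : v ∈ (m - Finsupp.single j k).support := by
    by_cases hc : F.coeff m = 0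
    · rw [MvPolynomial.monomial_eq_zero.mpr hc] at hv2
      simp at hv2
    · rwa [MvPolynomial.vars_monomial hc] at hv2
  have h3 : (m - Finsupp.single j k) v ≠ 0 := Finsupp.mem_support_iff.mp h2
  rw [Finsupp.tsub_apply] at h3
  have hvj : v ≠ j := by
    rintro rfl
    rw [Finsupp.single_eq_same, hmj] at h3
    omega
  refine ⟨(MvPolynomial.mem_vars v).mpr ⟨m, hmsup, ?_⟩, hvj⟩
  rw [Finsupp.mem_support_iff]
  rw [Finsupp.single_apply, if_neg (fun e => hvj e.symm)] at h3
  omega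

lemma vars_initial [NeZero n] {F : MvPolynomial (Fin n) A} {v : Fin n}
    (hv : v ∈ (initial F).vars) : v ∈ F.vars ∧ v ≠ mainVar F := by
  rw [← initial_eq_coeff] at hv
  exact vars_coeff_toUniv hv

lemma coeff_toUniv_degreeOf_ne_zero (j : Fin n) {F : MvPolynomial (Fin n) A} (hF : F ≠ 0) :
    (toUniv j F).coeff (F.degreeOf j) ≠ 0 := by
  classical
  set d := F.degreeOf j with hd
  have hsup : ∃ m ∈ F.support, m j = d := by
    obtain ⟨m, hm, hma⟩ := Finset.exists_mem_eq_sup F.support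
      (MvPolynomial.support_nonempty.mpr hF) (fun m => m j)
    exact ⟨m, hm, by rw [hd, MvPolynomial.degreeOf_eq_sup, hma]⟩
  obtain ⟨m0, hm0, hm0j⟩ := hsup
  rw [coeff_toUniv]
  intro hzero
  have hkey : ∀ m ∈ F.support.filter (fun m => m j = d), m ≠ m0 →
      MvPolynomial.coeff (m0 - Finsupp.single j d)
        (MvPolynomial.monomial (m - Finsupp.single j d) (F.coeff m)) = 0 := by
    intro m hm hne
    obtain ⟨hms, hmj⟩ := Finset.mem_filter.mp hm
    rw [MvPolynomial.coeff_monomial, if_neg]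
    intro he
    apply hne
    ext v
    by_cases hvj : v = j
    · subst hvj; rw [hmj, hm0j]
    · have := DFunLike.congr_fun he v
      rw [Finsupp.tsub_apply, Finsupp.tsub_apply, Finsupp.single_apply,
        if_neg (fun e : j = v => hvj e.symm)] at this
      simpa using this
  have hc := congrArg (MvPolynomial.coeff (m0 - Finsupp.single j d)) hzero
  rw [MvPolynomial.coeff_sum, Finset.sum_eq_single_of_mem m0
      (Finset.mem_filter.mpr ⟨hm0, hm0j⟩) (fun m hm hne => hkey m hm hne),
    MvPolynomial.coeff_monomial, if_pos rfl, MvPolynomial.coeff_zero] at hc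
  exact MvPolynomial.mem_support_iff.mp hm0 hc

end Stmt19Aux2
namespace Stmt19Aux3
open Stmt19Aux Stmt19Aux2 Matrix

variable {A : Type*} [CommRing A]

lemma row_sum (p : Polynomial A) (N a e : ℕ) (h : a + p.natDegree < N)
    (he : e = N - 1 - a - p.natDegree) :
    ∑ jj ∈ (Finset.range N).filter (fun jj => a ≤ jj ∧ jj ≤ a + p.natDegree),
      Polynomial.C (p.coeff (p.natDegree + a - jj)) * Polynomial.X ^ (N - 1 - jj)
    = Polynomial.X ^ e * p := by
  conv_rhs => rw [p.as_sum_range' (p.natDegree + 1) (Nat.lt_succ_self _)]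
  rw [Finset.mul_sum]
  refine Finset.sum_nbij' (fun jj => p.natDegree + a - jj) (fun k => p.natDegree + a - k)
    ?_ ?_ ?_ ?_ ?_
  · intro jj hj
    simp only [Finset.mem_filter, Finset.mem_range] at hj
    show p.natDegree + a - jj ∈ Finset.range (p.natDegree + 1)
    simp only [Finset.mem_range]
    omega
  · intro k hk
    simp only [Finset.mem_range] at hk
    show p.natDegree + a - k ∈ Finset.filter _ (Finset.range N)
    simp only [Finset.mem_filter, Finset.mem_range]
    omega
  · intro jj hj
    simp only [Finset.mem_filter, Finset.mem_range] at hj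
    show p.natDegree + a - (p.natDegree + a - jj) = jj
    omega
  · intro k hk
    simp only [Finset.mem_range] at hk
    show p.natDegree + a - (p.natDegree + a - k) = k
    omega
  · intro jj hj
    simp only [Finset.mem_filter, Finset.mem_range] at hj
    show Polynomial.C (p.coeff (p.natDegree + a - jj)) * Polynomial.X ^ (N - 1 - jj) =
      Polynomial.X ^ e * Polynomial.monomial (p.natDegree + a - jj) (p.coeff (p.natDegree + a - jj))
    rw [← Polynomial.C_mul_X_pow_eq_monomial, mul_left_comm, ← pow_add]
    congr 2
    omega

lemma sylvester_mulVec (f g : Polynomial A)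
    (i : Fin (f.natDegree + g.natDegree)) :
    (((sylvester f g).map Polynomial.C) *ᵥ
      (fun j : Fin (f.natDegree + g.natDegree) =>
        (Polynomial.X : Polynomial A) ^ (f.natDegree + g.natDegree - 1 - (j : ℕ)))) i =
      if (i : ℕ) < g.natDegree then
        Polynomial.X ^ (g.natDegree - 1 - (i : ℕ)) * f
      else
        Polynomial.X ^ (f.natDegree - 1 - ((i : ℕ) - g.natDegree)) * g := by
  classical
  have hiN : (i : ℕ) < f.natDegree + g.natDegree := i.isLt
  rw [Matrix.mulVec, dotProduct]
  by_cases hi : (i : ℕ) < g.natDegree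
  · rw [if_pos hi]
    have hstep : ∀ j : Fin (f.natDegree + g.natDegree),
        ((sylvester f g).map Polynomial.C) i j *
          Polynomial.X ^ (f.natDegree + g.natDegree - 1 - (j : ℕ)) =
        (fun jj : ℕ => if (i : ℕ) ≤ jj ∧ jj ≤ (i : ℕ) + f.natDegree then
            Polynomial.C (f.coeff (f.natDegree + (i : ℕ) - jj)) *
              Polynomial.X ^ (f.natDegree + g.natDegree - 1 - jj) else 0) ((j : Fin _) : ℕ) := by
      intro j
      show Polynomial.C (sylvester f g i j) *
          Polynomial.X ^ (f.natDegree + g.natDegree - 1 - (j : ℕ)) =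
        if (i : ℕ) ≤ (j : ℕ) ∧ (j : ℕ) ≤ (i : ℕ) + f.natDegree then
            Polynomial.C (f.coeff (f.natDegree + (i : ℕ) - (j : ℕ))) *
              Polynomial.X ^ (f.natDegree + g.natDegree - 1 - (j : ℕ)) else 0
      rw [sylvester, if_pos hi]
      split_ifs with h
      · rfl
      · simp
    rw [Finset.sum_congr rfl (fun j _ => hstep j),
      Fin.sum_univ_eq_sum_range (fun jj : ℕ => if (i : ℕ) ≤ jj ∧ jj ≤ (i : ℕ) + f.natDegree then
            Polynomial.C (f.coeff (f.natDegree + (i : ℕ) - jj)) *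
              Polynomial.X ^ (f.natDegree + g.natDegree - 1 - jj) else 0)
        (f.natDegree + g.natDegree), ← Finset.sum_filter]
    exact row_sum f (f.natDegree + g.natDegree) (i : ℕ) (g.natDegree - 1 - (i : ℕ))
      (by omega) (by omega)
  · rw [if_neg hi]
    have hstep : ∀ j : Fin (f.natDegree + g.natDegree),
        ((sylvester f g).map Polynomial.C) i j *
          Polynomial.X ^ (f.natDegree + g.natDegree - 1 - (j : ℕ)) =
        (fun jj : ℕ => if (i : ℕ) - g.natDegree ≤ jj ∧
              jj ≤ ((i : ℕ) - g.natDegree) + g.natDegree then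
            Polynomial.C (g.coeff (g.natDegree + ((i : ℕ) - g.natDegree) - jj)) *
              Polynomial.X ^ (f.natDegree + g.natDegree - 1 - jj) else 0) ((j : Fin _) : ℕ) := by
      intro j
      show Polynomial.C (sylvester f g i j) *
          Polynomial.X ^ (f.natDegree + g.natDegree - 1 - (j : ℕ)) =
        if (i : ℕ) - g.natDegree ≤ (j : ℕ) ∧
            (j : ℕ) ≤ ((i : ℕ) - g.natDegree) + g.natDegree then
            Polynomial.C (g.coeff (g.natDegree + ((i : ℕ) - g.natDegree) - (j : ℕ))) *
              Polynomial.X ^ (f.natDegree + g.natDegree - 1 - (j : ℕ)) else 0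
      rw [sylvester, if_neg hi]
      split_ifs with h
      · rfl
      · simp
    rw [Finset.sum_congr rfl (fun j _ => hstep j),
      Fin.sum_univ_eq_sum_range (fun jj : ℕ => if (i : ℕ) - g.natDegree ≤ jj ∧
              jj ≤ ((i : ℕ) - g.natDegree) + g.natDegree then
            Polynomial.C (g.coeff (g.natDegree + ((i : ℕ) - g.natDegree) - jj)) *
              Polynomial.X ^ (f.natDegree + g.natDegree - 1 - jj) else 0)
        (f.natDegree + g.natDegree), ← Finset.sum_filter]
    exact row_sum g (f.natDegree + g.natDegree) ((i : ℕ) - g.natDegree)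
      (f.natDegree - 1 - ((i : ℕ) - g.natDegree)) (by omega) (by omega)

lemma resultant_mem_span (f g : Polynomial A) (hN : 0 < f.natDegree + g.natDegree) :
    Polynomial.C (resultant f g) ∈ Ideal.span ({f, g} : Set (Polynomial A)) := by
  classical
  have hdet : Polynomial.C (resultant f g) = ((sylvester f g).map Polynomial.C).det := by
    rw [resultant, RingHom.map_det, RingHom.mapMatrix_apply]
  set M := (sylvester f g).map (Polynomial.C (R := A)) with hM
  set b : Fin (f.natDegree + g.natDegree) → Polynomial A :=
    fun j => (Polynomial.X : Polynomial A) ^ (f.natDegree + g.natDegree - 1 - (j : ℕ)) with hb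
  set k0 : Fin (f.natDegree + g.natDegree) := ⟨f.natDegree + g.natDegree - 1, by omega⟩ with hk0
  have hbk0 : b k0 = 1 := by simp [hb, hk0]
  have hc : Matrix.cramer M (M *ᵥ b) = M.det • b := by
    rw [Matrix.cramer_eq_adjugate_mulVec, Matrix.mulVec_mulVec, Matrix.adjugate_mul,
      Matrix.smul_mulVec, Matrix.one_mulVec]
  have h2 : M.det = Matrix.cramer M (M *ᵥ b) k0 := by
    rw [hc, Pi.smul_apply, hbk0, smul_eq_mul, mul_one]
  rw [hdet, h2, Matrix.cramer_eq_adjugate_mulVec, Matrix.mulVec, dotProduct]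
  refine Ideal.sum_mem _ fun j _ => ?_
  have hthis := sylvester_mulVec f g j
  rw [← hM, ← hb] at hthis
  rw [hthis]
  split_ifs
  · exact Ideal.mul_mem_left _ _ (Ideal.mul_mem_left _ _
      (Ideal.subset_span (Set.mem_insert _ _)))
  · exact Ideal.mul_mem_left _ _ (Ideal.mul_mem_left _ _
      (Ideal.subset_span (Set.mem_insert_of_mem _ rfl)))

end Stmt19Aux3
namespace Stmt19Aux4
open Stmt19Aux Stmt19Aux2 Stmt19Aux3

variable {A : Type*} [CommRing A] {n : ℕ} [NeZero n]

lemma one_le_natDegree_toUniv {P : MvPolynomial (Fin n) A} (hP : P.vars.Nonempty) :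
    1 ≤ (toUniv (mainVar P) P).natDegree := by
  have hP0 : P ≠ 0 := fun h => by simp [h] at hP
  have h1 := coeff_toUniv_degreeOf_ne_zero (mainVar P) hP0
  have h2 : 0 < P.degreeOf (mainVar P) := degreeOf_pos (mainVar_mem_vars hP)
  have := Polynomial.le_natDegree_of_ne_zero h1
  omega

lemma res1_eq (F P : MvPolynomial (Fin n) A) (hP : P.vars.Nonempty) :
    ∃ u w : MvPolynomial (Fin n) A, res1 F P = u * F + w * P := by
  have hN : 0 < (toUniv (mainVar P) F).natDegree + (toUniv (mainVar P) P).natDegree := by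
    have := one_le_natDegree_toUniv hP
    omega
  have h := resultant_mem_span (toUniv (mainVar P) F) (toUniv (mainVar P) P) hN
  rw [Ideal.mem_span_pair] at h
  obtain ⟨u, v, huv⟩ := h
  refine ⟨Polynomial.eval (MvPolynomial.X (mainVar P)) u,
    Polynomial.eval (MvPolynomial.X (mainVar P)) v, ?_⟩
  have h2 := congrArg (Polynomial.eval (MvPolynomial.X (mainVar P) : MvPolynomial (Fin n) A)) huv
  rw [Polynomial.eval_add, Polynomial.eval_mul, Polynomial.eval_mul, Polynomial.eval_C,
    eval_X_toUniv, eval_X_toUniv] at h2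
  rw [res1, ← h2]

lemma sres_eq (l : List (MvPolynomial (Fin n) A)) (hl : ∀ P ∈ l, P.vars.Nonempty)
    (F : MvPolynomial (Fin n) A) :
    ∃ u w : MvPolynomial (Fin n) A,
      w ∈ Ideal.span {p : MvPolynomial (Fin n) A | p ∈ l} ∧ sres F l = u * F + w := by
  induction l generalizing F with
  | nil => exact ⟨1, 0, Ideal.zero_mem _, by simp [sres]⟩
  | cons P l ih =>
    obtain ⟨u1, w1, h1⟩ := res1_eq F P (hl P (List.mem_cons_self))
    obtain ⟨u2, w2, hw2, h2⟩ := ih (fun Q hQ => hl Q (List.mem_cons_of_mem _ hQ)) (res1 F P)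
    refine ⟨u2 * u1, u2 * (w1 * P) + w2, ?_, ?_⟩
    · refine Ideal.add_mem _ (Ideal.mul_mem_left _ _ (Ideal.mul_mem_left _ _ ?_)) ?_
      · exact Ideal.subset_span (List.mem_cons_self)
      · refine Ideal.span_mono (fun x hx => ?_) hw2
        exact List.mem_cons_of_mem _ hx
    · have : sres F (P :: l) = sres (res1 F P) l := rfl
      rw [this, h2, h1]
      ring

lemma det_mem_subalgebra {N : ℕ} {A' : Type*} [CommRing A'] {R : Type*} [CommRing R]
    [Algebra R A'] (M : Matrix (Fin N) (Fin N) A') (S : Subalgebra R A')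
    (h : ∀ i j, M i j ∈ S) : M.det ∈ S := by
  rw [Matrix.det_apply']
  refine Subalgebra.sum_mem S fun σ _ => ?_
  exact Subalgebra.mul_mem S (Subalgebra.intCast_mem S _)
    (Subalgebra.prod_mem S fun i _ => h _ _)

lemma vars_res1 {F P : MvPolynomial (Fin n) A} {v : Fin n}
    (hv : v ∈ (res1 F P).vars) : (v ∈ F.vars ∨ v ∈ P.vars) ∧ v ≠ mainVar P := by
  classical
  set s : Set (Fin n) := {w | (w ∈ F.vars ∨ w ∈ P.vars) ∧ w ≠ mainVar P} with hs
  have hmem : res1 F P ∈ MvPolynomial.supported A s := by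
    rw [res1, resultant]
    refine det_mem_subalgebra _ _ fun i j => ?_
    rw [sylvester]
    split_ifs
    · rw [MvPolynomial.mem_supported]
      intro w hw
      obtain ⟨h1, h2⟩ := vars_coeff_toUniv hw
      exact ⟨Or.inl h1, h2⟩
    · exact Subalgebra.zero_mem _
    · rw [MvPolynomial.mem_supported]
      intro w hw
      obtain ⟨h1, h2⟩ := vars_coeff_toUniv hw
      exact ⟨Or.inr h1, h2⟩
    · exact Subalgebra.zero_mem _
  have := MvPolynomial.mem_supported.mp hmem
  exact this hv

/-- Variable control for iterated resultants (with a sortedness hypothesis). -/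
lemma vars_sres {l : List (MvPolynomial (Fin n) A)}
    (hl : l.Pairwise (fun P Q => ∀ w ∈ Q.vars, w < mainVar P))
    {F : MvPolynomial (Fin n) A} {v : Fin n} (hv : v ∈ (sres F l).vars) :
    (v ∈ F.vars ∨ ∃ P ∈ l, v ∈ P.vars) ∧ ∀ P ∈ l, v ≠ mainVar P := by
  induction l generalizing F with
  | nil =>
    simp only [sres, List.foldl_nil] at hv
    exact ⟨Or.inl hv, by simp⟩
  | cons P l ih =>
    have hv' : v ∈ (sres (res1 F P) l).vars := hv
    obtain ⟨hhead, htail⟩ := List.pairwise_cons.mp hl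
    obtain ⟨h1, h2⟩ := ih htail hv'
    have hforall : ∀ Q ∈ P :: l, v ≠ mainVar Q := by
      rcases h1 with hF' | ⟨Q0, hQ0, hvQ0⟩
      · intro Q hQ
        rcases List.mem_cons.mp hQ with rfl | hQ'
        · exact (vars_res1 hF').2
        · exact h2 Q hQ'
      · intro Q hQ
        rcases List.mem_cons.mp hQ with rfl | hQ'
        · exact ne_of_lt (hhead Q0 hQ0 v hvQ0)
        · exact h2 Q hQ'
    refine ⟨?_, hforall⟩
    rcases h1 with hF' | ⟨Q0, hQ0, hvQ0⟩
    · rcases (vars_res1 hF').1 with h | h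
      · exact Or.inl h
      · exact Or.inr ⟨P, List.mem_cons_self, h⟩
    · exact Or.inr ⟨Q0, List.mem_cons_of_mem _ hQ0, hvQ0⟩

end Stmt19Aux4
namespace Stmt19Aux5
open Stmt19Aux Stmt19Aux2 Stmt19Aux3 Stmt19Aux4

/-- The big algebraically closed field. -/
abbrev Om (K : Type*) [Field K] (d n : ℕ) : Type _ :=
  AlgebraicClosure (FractionRing (MvPolynomial (Fin n) (MvPolynomial (Fin d) K)))

variable (K : Type*) [Field K] (d n : ℕ)

/-- Canonical embedding. -/
noncomputable def iot : MvPolynomial (Fin n) (MvPolynomial (Fin d) K) →+* Om K d n :=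
  (algebraMap (FractionRing (MvPolynomial (Fin n) (MvPolynomial (Fin d) K)))
    (Om K d n)).comp
    (algebraMap (MvPolynomial (Fin n) (MvPolynomial (Fin d) K))
      (FractionRing (MvPolynomial (Fin n) (MvPolynomial (Fin d) K))))

lemma iot_inj : Function.Injective (iot K d n) := by
  have h1 : Function.Injective (algebraMap
      (FractionRing (MvPolynomial (Fin n) (MvPolynomial (Fin d) K))) (Om K d n)) :=
    RingHom.injective _
  have h2 : Function.Injective (algebraMap (MvPolynomial (Fin n) (MvPolynomial (Fin d) K))
      (FractionRing (MvPolynomial (Fin n) (MvPolynomial (Fin d) K)))) :=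
    IsFractionRing.injective _ _
  rw [iot, RingHom.coe_comp]
  exact h1.comp h2

variable {K d n}

open Classical in
/-- Specialization at a tuple of roots. -/
noncomputable def phi {r : ℕ} (m : Fin r → Fin n) (α : Fin r → Om K d n) :
    MvPolynomial (Fin n) (MvPolynomial (Fin d) K) →+* Om K d n :=
  MvPolynomial.eval₂Hom ((iot K d n).comp
      (MvPolynomial.C : MvPolynomial (Fin d) K →+* MvPolynomial (Fin n) (MvPolynomial (Fin d) K)))
    (fun v => if h : ∃ j, m j = v then α h.choose else iot K d n (MvPolynomial.X v))

lemma phi_X {r : ℕ} {m : Fin r → Fin n} (hm : Function.Injective m)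
    (α : Fin r → Om K d n) (j : Fin r) :
    phi m α (MvPolynomial.X (m j)) = α j := by
  classical
  rw [phi, MvPolynomial.eval₂Hom_X']
  have hex : ∃ j', m j' = m j := ⟨j, rfl⟩
  rw [dif_pos hex]
  exact congrArg α (hm hex.choose_spec)

lemma eval₂_congr_vars {σ R S : Type*} [CommSemiring R] [CommSemiring S] (f : R →+* S)
    {g1 g2 : σ → S} {p : MvPolynomial σ R} (h : ∀ v ∈ p.vars, g1 v = g2 v) :
    MvPolynomial.eval₂ f g1 p = MvPolynomial.eval₂ f g2 p := by
  classical
  rw [MvPolynomial.eval₂_eq, MvPolynomial.eval₂_eq]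
  refine Finset.sum_congr rfl fun dd hdd => ?_
  congr 1
  refine Finset.prod_congr rfl fun v hv => ?_
  rw [h v ((MvPolynomial.mem_vars v).mpr ⟨dd, hdd, hv⟩)]

lemma phi_eq_iot {r : ℕ} {m : Fin r → Fin n} (α : Fin r → Om K d n)
    {q : MvPolynomial (Fin n) (MvPolynomial (Fin d) K)}
    (h : ∀ v ∈ q.vars, ¬ ∃ j, m j = v) :
    phi m α q = iot K d n q := by
  classical
  have hiot : iot K d n q = MvPolynomial.eval₂ ((iot K d n).comp MvPolynomial.C)
      (fun v => iot K d n (MvPolynomial.X v)) q := by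
    have : (MvPolynomial.eval₂Hom ((iot K d n).comp MvPolynomial.C)
        (fun v => iot K d n (MvPolynomial.X v))) = iot K d n := by
      apply MvPolynomial.ringHom_ext
      · intro a; simp
      · intro v; simp
    conv_lhs => rw [← this]
    rfl
  rw [phi, MvPolynomial.coe_eval₂Hom, hiot]
  refine eval₂_congr_vars _ fun v hv => ?_
  rw [dif_neg (h v hv)]

lemma phi_congr {r : ℕ} {m : Fin r → Fin n} {α α' : Fin r → Om K d n}
    {q : MvPolynomial (Fin n) (MvPolynomial (Fin d) K)}
    (h : ∀ j, m j ∈ q.vars → α j = α' j) :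
    phi m α q = phi m α' q := by
  classical
  rw [phi, phi, MvPolynomial.coe_eval₂Hom, MvPolynomial.coe_eval₂Hom]
  refine eval₂_congr_vars _ fun v hv => ?_
  by_cases hvm : ∃ j, m j = v
  · rw [dif_pos hvm, dif_pos hvm]
    have hspec := hvm.choose_spec
    exact h hvm.choose (by rw [hspec]; exact hv)
  · rw [dif_neg hvm, dif_neg hvm]

lemma phi_apply_eq_eval {r : ℕ} (m : Fin r → Fin n) (α : Fin r → Om K d n) (j : Fin n)
    (F : MvPolynomial (Fin n) (MvPolynomial (Fin d) K)) :
    phi m α F = Polynomial.eval (phi m α (MvPolynomial.X j)) ((toUniv j F).map (phi m α)) := by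
  conv_lhs => rw [← eval_X_toUniv j F]
  show (phi m α) (Polynomial.eval₂ (RingHom.id _) (MvPolynomial.X j) (toUniv j F)) = _
  rw [Polynomial.hom_eval₂, RingHom.comp_id, ← Polynomial.eval_map]

set_option synthInstance.maxHeartbeats 1000000 in
lemma phi_map_sum {r : ℕ} (m : Fin r → Fin n) (α : Fin r → Om K d n) {ι : Type*}
    (s : Finset ι) (f : ι → MvPolynomial (Fin n) (MvPolynomial (Fin d) K)) :
    phi m α (∑ i ∈ s, f i) = ∑ i ∈ s, phi m α (f i) :=
  map_sum _ _ _

set_option synthInstance.maxHeartbeats 1000000 in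
lemma phi_map_prod {r : ℕ} (m : Fin r → Fin n) (α : Fin r → Om K d n) {ι : Type*}
    (s : Finset ι) (f : ι → MvPolynomial (Fin n) (MvPolynomial (Fin d) K)) :
    phi m α (∏ i ∈ s, f i) = ∏ i ∈ s, phi m α (f i) :=
  map_prod _ _ _

end Stmt19Aux5
namespace Stmt19Aux6
open Stmt19Aux Stmt19Aux2 Stmt19Aux3 Stmt19Aux4 Stmt19Aux5

variable {K : Type*} [Field K] {d n : ℕ} [NeZero n] {r : ℕ}

lemma mem_take_reverse_ofFn {β : Type*} {k : ℕ} (T : Fin r → β) {Q : β} :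
    Q ∈ ((List.ofFn T).take k).reverse ↔ ∃ j : Fin r, (j : ℕ) < k ∧ Q = T j := by
  rw [List.mem_reverse, List.mem_take_iff_getElem]
  constructor
  · rintro ⟨i, hi, rfl⟩
    simp only [List.length_ofFn] at hi
    have hik : i < k ∧ i < r := by omega
    refine ⟨⟨i, hik.2⟩, ?_, ?_⟩
    · show i < k
      exact hik.1
    · rw [List.getElem_ofFn]
  · rintro ⟨j, hj, rfl⟩
    refine ⟨(j : ℕ), ?_, ?_⟩
    · simp only [List.length_ofFn]; omega
    · rw [List.getElem_ofFn]

lemma pairwise_take (T : Fin r → MvPolynomial (Fin n) (MvPolynomial (Fin d) K))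
    (hT : IsTriangular T) (k : ℕ) :
    (((List.ofFn T).take k).reverse).Pairwise
      (fun P Q => ∀ w ∈ Q.vars, w < mainVar P) := by
  rw [List.pairwise_reverse]
  refine (List.pairwise_ofFn.mpr ?_).sublist (List.take_sublist _ _)
  intro i j hij w hw
  exact lt_of_le_of_lt (le_mainVar hw) (hT.2 hij)

lemma exists_alpha (T : Fin r → MvPolynomial (Fin n) (MvPolynomial (Fin d) K))
    (hT : IsRegularChain T) :
    ∃ α : Fin r → Om K d n, ∀ i : Fin r,
      phi (fun i => mainVar (T i)) α (T i) = 0 ∧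
      phi (fun i => mainVar (T i)) α (initial (T i)) ≠ 0 := by
  obtain ⟨⟨hne, hmono⟩, hc0, hci⟩ := hT
  set m : Fin r → Fin n := fun i => mainVar (T i) with hm
  have hminj : Function.Injective m := hmono.injective
  have main : ∀ k : ℕ, k ≤ r → ∃ α : Fin r → Om K d n, ∀ i : Fin r, (i : ℕ) < k →
      phi m α (T i) = 0 ∧ phi m α (initial (T i)) ≠ 0 := by
    intro k
    induction k with
    | zero => exact fun _ => ⟨fun _ => 0, fun i hi => absurd hi (by omega)⟩
    | succ k ih =>
      intro hk
      obtain ⟨α, hα⟩ := ih (by omega)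
      have hkr : k < r := by omega
      set i0 : Fin r := ⟨k, hkr⟩ with hi0
      -- the iterated resultant of the initial is nonzero
      have hh0ne : sres (initial (T i0)) (((List.ofFn T).take k).reverse) ≠ 0 := by
        rcases Nat.eq_zero_or_pos k with hk0 | hk0
        · subst hk0
          simp only [List.take_zero, List.reverse_nil]
          show sres _ [] ≠ 0
          simpa [sres] using hc0 i0 rfl
        · exact hci i0 hk0
      -- its variables avoid the main variables
      have hvars_h0 : ∀ v ∈ (sres (initial (T i0)) (((List.ofFn T).take k).reverse)).vars,
          ¬ ∃ j : Fin r, m j = v := by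
        rintro v hv ⟨j, hj⟩
        obtain ⟨h1, h2⟩ := vars_sres (pairwise_take T ⟨hne, hmono⟩ k) hv
        rcases Nat.lt_or_ge (j : ℕ) k with hjk | hjk
        · exact h2 (T j) ((mem_take_reverse_ofFn T).mpr ⟨j, hjk, rfl⟩) (hj ▸ rfl)
        · have hlt : v < m i0 := by
            rcases h1 with hI | ⟨P, hP, hvP⟩
            · obtain ⟨hv1, hv2⟩ := vars_initial hI
              exact lt_of_le_of_ne (le_mainVar hv1) hv2
            · obtain ⟨j', hj'k, rfl⟩ := (mem_take_reverse_ofFn T).mp hP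
              exact lt_of_le_of_lt (le_mainVar hvP)
                (hmono (show j' < i0 by rw [Fin.lt_def]; show (j' : ℕ) < k; exact hj'k))
          have hle : m i0 ≤ m j := hmono.monotone (by rw [Fin.le_def]; show k ≤ (j : ℕ); omega)
          rw [hj] at hle
          exact absurd hle (not_le.mpr hlt)
      -- linear combination
      obtain ⟨u, w, hwmem, heq⟩ := sres_eq (((List.ofFn T).take k).reverse)
        (fun P hP => by
          obtain ⟨j, hjk, rfl⟩ := (mem_take_reverse_ofFn T).mp hP
          exact hne j) (initial (T i0))
      have hw0 : phi m α w = 0 := by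
        have hker : Ideal.span {p : MvPolynomial (Fin n) (MvPolynomial (Fin d) K) |
            p ∈ ((List.ofFn T).take k).reverse} ≤ RingHom.ker (phi m α) := by
          rw [Ideal.span_le]
          rintro p hp
          obtain ⟨j, hjk, rfl⟩ := (mem_take_reverse_ofFn T).mp hp
          exact (hα j hjk).1
        exact hker hwmem
      have hIne : phi m α (initial (T i0)) ≠ 0 := by
        intro hz
        have h3 : phi m α (sres (initial (T i0)) (((List.ofFn T).take k).reverse)) = 0 := by
          rw [heq, RingHom.map_add, RingHom.map_mul, hz, mul_zero, hw0, add_zero]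
        rw [phi_eq_iot α hvars_h0] at h3
        exact hh0ne (iot_inj K d n (by rw [h3, map_zero]))
      -- choose a root
      have hqc : ((toUniv (m i0) (T i0)).map (phi m α)).coeff ((T i0).degreeOf (m i0)) =
          phi m α (initial (T i0)) := by
        rw [Polynomial.coeff_map]
        congr 1
        exact initial_eq_coeff (T i0)
      have hd1 : 1 ≤ (T i0).degreeOf (m i0) := degreeOf_pos (mainVar_mem_vars (hne i0))
      have hqdeg : ((toUniv (m i0) (T i0)).map (phi m α)).degree ≠ 0 := by
        intro hdeg
        have hle := Polynomial.le_degree_of_ne_zero (n := (T i0).degreeOf (m i0))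
          (p := (toUniv (m i0) (T i0)).map (phi m α)) (by rw [hqc]; exact hIne)
        rw [hdeg] at hle
        have h6 : degreeOf (m i0) (T i0) ≤ 0 := by exact_mod_cast hle
        omega
      obtain ⟨ρ, hρ⟩ := IsAlgClosed.exists_root _ hqdeg
      refine ⟨Function.update α i0 ρ, fun i hik => ?_⟩
      have hagree : ∀ (p : MvPolynomial (Fin n) (MvPolynomial (Fin d) K)),
          m i0 ∉ p.vars → phi m (Function.update α i0 ρ) p = phi m α p := by
        intro p hp
        refine (phi_congr fun j hj => ?_).symm
        rw [Function.update_apply]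
        split_ifs with hji
        · exact absurd (by rwa [hji] at hj) hp
        · rfl
      rcases Nat.lt_or_ge (i : ℕ) k with hik' | hik'
      · have hTi : m i0 ∉ (T i).vars := fun hmem => by
          have h4 := le_mainVar hmem
          have h5 : m i < m i0 := hmono (by rw [Fin.lt_def]; exact hik')
          exact absurd h4 (not_le.mpr h5)
        have hIi : m i0 ∉ (initial (T i)).vars := fun hmem => hTi (vars_initial hmem).1
        rw [hagree _ hTi, hagree _ hIi]
        exact hα i hik'
      · have hii0 : i = i0 := by
          apply Fin.ext
          show (i : ℕ) = k
          omega
        subst hii0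
        have hIvars : m i0 ∉ (initial (T i0)).vars := fun hmem => (vars_initial hmem).2 rfl
        constructor
        · rw [phi_apply_eq_eval m _ (m i0) (T i0)]
          have hmap : (toUniv (m i0) (T i0)).map (phi m (Function.update α i0 ρ)) =
              (toUniv (m i0) (T i0)).map (phi m α) := by
            ext kk
            rw [Polynomial.coeff_map, Polynomial.coeff_map]
            refine phi_congr fun j hj => ?_
            rw [Function.update_apply]
            split_ifs with hji
            · exfalso
              rw [hji] at hj
              exact (vars_coeff_toUniv hj).2 rfl
            · rfl
          rw [hmap, phi_X hminj _ i0, Function.update_self]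
          exact hρ
        · rw [hagree _ hIvars]
          exact hIne
  obtain ⟨α, hα⟩ := main r le_rfl
  exact ⟨α, fun i => hα i i.isLt⟩

end Stmt19Aux6
/-- For a regular chain `T` in `K[U][X]`, if the successive resultant
`res(F, T) ≠ 0` then `F` is not in the saturated ideal `sat(T) = {G : I_T^s·G ∈ ⟨T⟩}`. -/
theorem stmt19 [NeZero n] {r : ℕ}
    (T : Fin r → MvPolynomial (Fin n) (MvPolynomial (Fin d) K))
    (hT : IsRegularChain T)
    (F : MvPolynomial (Fin n) (MvPolynomial (Fin d) K))
    (hres : sres F (List.ofFn T).reverse ≠ 0) :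
    ¬ ∃ s : ℕ, (∏ i, initial (T i)) ^ s * F ∈ Ideal.span (Set.range T) := by
  rintro ⟨s, hmem⟩
  obtain ⟨α, hα⟩ := Stmt19Aux6.exists_alpha T hT
  set φ : MvPolynomial (Fin n) (MvPolynomial (Fin d) K) →+* Stmt19Aux5.Om K d n :=
    Stmt19Aux5.phi (fun i => mainVar (T i)) α with hφ
  -- every polynomial of the list has nonempty variables
  have hl : ∀ P ∈ (List.ofFn T).reverse, P.vars.Nonempty := by
    intro P hP
    rw [List.mem_reverse, List.mem_ofFn] at hP
    obtain ⟨j, rfl⟩ := hP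
    exact hT.1.1 j
  obtain ⟨u, w, hwmem, heq⟩ := Stmt19Aux4.sres_eq (List.ofFn T).reverse hl F
  -- pairwise (sorted) structure of the full reversed list
  have hpw := Stmt19Aux6.pairwise_take T hT.1 r
  rw [List.take_of_length_le (by simp)] at hpw
  have hvars : ∀ v ∈ (sres F (List.ofFn T).reverse).vars,
      ¬ ∃ j : Fin r, (fun i => mainVar (T i)) j = v := by
    rintro v hv ⟨j, hj⟩
    have h1 := Stmt19Aux4.vars_sres hpw hv
    refine h1.2 (T j) ?_ (hj ▸ rfl)
    rw [List.mem_reverse, List.mem_ofFn]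
    exact ⟨j, rfl⟩
  have hw0 : φ w = 0 := by
    have hker : Ideal.span {p : MvPolynomial (Fin n) (MvPolynomial (Fin d) K) |
        p ∈ (List.ofFn T).reverse} ≤ RingHom.ker φ := by
      rw [Ideal.span_le]
      rintro p hp
      rw [Set.mem_setOf_eq, List.mem_reverse, List.mem_ofFn] at hp
      obtain ⟨j, rfl⟩ := hp
      exact (hα j).1
    exact hker hwmem
  have hFne : φ F ≠ 0 := by
    intro hz
    have h3 : φ (sres F (List.ofFn T).reverse) = 0 := by
      rw [heq, RingHom.map_add, RingHom.map_mul, hz, mul_zero, hw0, add_zero]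
    rw [hφ, Stmt19Aux5.phi_eq_iot α hvars] at h3
    exact hres (Stmt19Aux5.iot_inj K d n (by rw [h3, map_zero]))
  -- apply φ to the membership equation
  obtain ⟨c, hc⟩ := Ideal.mem_span_range_iff_exists_fun.mp hmem
  have hL : φ (∑ i, c i * T i) = 0 := by
    rw [hφ, Stmt19Aux5.phi_map_sum]
    rw [← hφ]
    refine Finset.sum_eq_zero fun i _ => ?_
    rw [RingHom.map_mul, (hα i).1, mul_zero]
  have hprod : φ (∏ i, initial (T i)) ≠ 0 := by
    rw [hφ, Stmt19Aux5.phi_map_prod]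
    rw [← hφ]
    exact Finset.prod_ne_zero_iff.mpr fun i _ => (hα i).2
  have hR : φ ((∏ i, initial (T i)) ^ s * F) ≠ 0 := by
    rw [RingHom.map_mul, RingHom.map_pow]
    exact mul_ne_zero (pow_ne_zero _ hprod) hFne
  rw [hc] at hL
  exact hR hL

end
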